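/- Let r, m, ℓ₁, ℓ₂, k be natural numbers with 2^r ≤ k < 2^{r+1}, ℓ₁ < 2^{r+1}, ℓ₂ < 2^{r+1}, and ℓ₁ + ℓ₂ < k. Then the bitwise XOR of (2^{r+1}·m + ℓ₁) and (2^{r+1}·m + ℓ₂) is strictly less than k; in particular the nim-sum (2^{r+1}·m + ℓ₁) XOR (2^{r+1}·m + ℓ₂) XOR k is nonzero. -/

import Mathlib

theorem xor_le_add' : ∀ a b : ℕ, a ^^^ b ≤ a + b := by
  intro a
  induction a using Nat.strong_induction_on with
  | _ a ih =>
    intro b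
    rcases Nat.eq_zero_or_pos a with ha | ha
    · simp [ha]
    have h1 : (a ^^^ b) / 2 = a / 2 ^^^ b / 2 := Nat.xor_div_two
    have h2 : (a ^^^ b) % 2 = (a + b) % 2 := Nat.xor_mod_two_eq
    have h3 : a / 2 ^^^ b / 2 ≤ a / 2 + b / 2 := ih (a / 2) (Nat.div_lt_self ha (by norm_num)) _
    omega

theorem xor_shift_eq (n m ℓ₁ ℓ₂ : ℕ) (h1 : ℓ₁ < 2 ^ n) (h2 : ℓ₂ < 2 ^ n) :
    (2 ^ n * m + ℓ₁) ^^^ (2 ^ n * m + ℓ₂) = ℓ₁ ^^^ ℓ₂ := by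
  apply Nat.eq_of_testBit_eq
  intro j
  simp only [Nat.testBit_xor, Nat.testBit_two_pow_mul_add _ h1, Nat.testBit_two_pow_mul_add _ h2]
  by_cases hj : j < n
  · simp [hj]
  · simp only [if_neg hj, bne_self_eq_false, Bool.bne_eq_xor]
    have hj1 : ℓ₁.testBit j = false := Nat.testBit_lt_two_pow (lt_of_lt_of_le h1 (Nat.pow_le_pow_right (by norm_num) (le_of_not_gt hj)))
    have hj2 : ℓ₂.testBit j = false := Nat.testBit_lt_two_pow (lt_of_lt_of_le h2 (Nat.pow_le_pow_right (by norm_num) (le_of_not_gt hj)))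
    simp [hj1, hj2]

/-- If `2^r ≤ k < 2^(r+1)`, `ℓ₁, ℓ₂ < 2^(r+1)` and `ℓ₁ + ℓ₂ < k`, then the XOR of
`2^(r+1)·m + ℓ₁` and `2^(r+1)·m + ℓ₂` is less than `k`; in particular the nim-sum
of the three numbers is nonzero. -/
theorem xor_lt_of_sum_lt (r m ℓ₁ ℓ₂ k : ℕ)
    (h1 : 2 ^ r ≤ k) (h2 : k < 2 ^ (r + 1))
    (h3 : ℓ₁ < 2 ^ (r + 1)) (h4 : ℓ₂ < 2 ^ (r + 1)) (h5 : ℓ₁ + ℓ₂ < k) :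
    (2 ^ (r + 1) * m + ℓ₁) ^^^ (2 ^ (r + 1) * m + ℓ₂) < k ∧
      (2 ^ (r + 1) * m + ℓ₁) ^^^ (2 ^ (r + 1) * m + ℓ₂) ^^^ k ≠ 0 := by
  have heq := xor_shift_eq (r + 1) m ℓ₁ ℓ₂ h3 h4
  have hle := xor_le_add' ℓ₁ ℓ₂
  have hlt : (2 ^ (r + 1) * m + ℓ₁) ^^^ (2 ^ (r + 1) * m + ℓ₂) < k := by omega
  refine ⟨hlt, ?_⟩
  rw [Nat.xor_ne_zero_iff]
  omega
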